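/- Let M be a nonempty compact subset of ℝ^{n₀} and let σ : ℝ → ℝ be a continuous monotone activation function. Then every network function F ∈ NN_σ(n₀), i.e. every network function F : ℝ^{n₀} → ℝ with activation σ whose every layer has width at most n₀, attains its minimum value over M at a point of the boundary ∂M; that is, there exists x* ∈ ∂M with F(x*) = min_{x∈M} F(x). -/

import Mathlib

noncomputable section

/-- The rectified linear unit. -/
def ReLU (t : ℝ) : ℝ := max t 0

/-- `IsNetChain σ m F` : `F` is a network function of the form
`W_L ∘ A_{L-1} ∘ ⋯ ∘ A_1 + b_L` where `A_j x = σ (W_j x + b_j)` (with `σ` applied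
componentwise), and all layer widths `n_1,…,n_L` are at most `m`. -/
inductive IsNetChain (σ : ℝ → ℝ) (m : ℕ) : {a b : ℕ} → ((Fin a → ℝ) → (Fin b → ℝ)) → Prop
  | last {a b : ℕ} (W : Matrix (Fin b) (Fin a) ℝ) (v : Fin b → ℝ) (hb : b ≤ m) :
      IsNetChain σ m (fun x => W.mulVec x + v)
  | hidden {a b c : ℕ} (W : Matrix (Fin b) (Fin a) ℝ) (v : Fin b → ℝ)
      {g : (Fin b → ℝ) → (Fin c → ℝ)} (hb : b ≤ m) (hg : IsNetChain σ m g) :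
      IsNetChain σ m (fun x => g (fun i => σ (W.mulVec x i + v i)))

/-- Scalar-output network functions of width at most `m`; the class `NN_σ(m)`. -/
def IsScalarNet (σ : ℝ → ℝ) (m : ℕ) {n₀ : ℕ} (F : (Fin n₀ → ℝ) → ℝ) : Prop :=
  ∃ G : (Fin n₀ → ℝ) → (Fin 1 → ℝ), IsNetChain σ m G ∧ ∀ x, F x = G x 0

section AuxMinimumPrinciple
open Metric Set

lemma netchain_out_le {σ : ℝ → ℝ} {m a b : ℕ} {G : (Fin a → ℝ) → (Fin b → ℝ)}
    (h : IsNetChain σ m G) : b ≤ m := by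
  induction h with
  | last W v hb => exact hb
  | hidden W v hb hg ih => exact ih

lemma netchain_continuous {σ : ℝ → ℝ} {m a b : ℕ} {G : (Fin a → ℝ) → (Fin b → ℝ)}
    (hσ : Continuous σ) (h : IsNetChain σ m G) : Continuous G := by
  induction h with
  | last W v hb =>
      exact ((W.mulVecLin.continuous_of_finiteDimensional).add continuous_const :
        Continuous fun x => W.mulVecLin x + v)
  | hidden W v hb hg ih =>
      refine ih.comp (continuous_pi fun i => hσ.comp ?_)
      exact ((continuous_apply i).comp W.mulVecLin.continuous_of_finiteDimensional).add
        continuous_const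

lemma ray_to_frontier {a : ℕ} {M : Set (Fin a → ℝ)} (hMc : IsCompact M)
    {f : (Fin a → ℝ) → ℝ} {xs : Fin a → ℝ} (hxs : xs ∈ M)
    (hmin : ∀ x ∈ M, f xs ≤ f x) {v : Fin a → ℝ} (hv : v ≠ 0)
    (hray : ∀ t : ℝ, 0 ≤ t → f (xs + t • v) ≤ f xs) :
    ∃ x₀ ∈ frontier M, x₀ ∈ M ∧ ∀ x ∈ M, f x₀ ≤ f x := by
  set S : Set ℝ := {t : ℝ | 0 ≤ t ∧ xs + t • v ∈ M} with hS
  have hSc : IsClosed S := by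
    have : Continuous fun t : ℝ => xs + t • v := by continuity
    exact (isClosed_Ici.preimage continuous_id).inter (hMc.isClosed.preimage this)
  have hSne : S.Nonempty := ⟨0, le_refl 0, by simpa using hxs⟩
  obtain ⟨R, hR⟩ : ∃ R, ∀ x ∈ M, ‖x‖ ≤ R := hMc.isBounded.exists_norm_le
  have hvn : 0 < ‖v‖ := norm_pos_iff.2 hv
  have hSb : BddAbove S := by
    refine ⟨(R + ‖xs‖) / ‖v‖, fun t ht => ?_⟩
    have h1 : ‖t • v‖ ≤ R + ‖xs‖ := by
      have : t • v = (xs + t • v) - xs := by abel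
      rw [this]
      calc ‖(xs + t • v) - xs‖ ≤ ‖xs + t • v‖ + ‖xs‖ := norm_sub_le _ _
        _ ≤ R + ‖xs‖ := by linarith [hR _ ht.2]
    rw [norm_smul, Real.norm_eq_abs, abs_of_nonneg ht.1] at h1
    rw [le_div_iff₀ hvn]; exact h1
  set ts := sSup S with hts
  have htS : ts ∈ S := hSc.csSup_mem hSne hSb
  set x₀ := xs + ts • v with hx₀
  have hx₀M : x₀ ∈ M := htS.2
  have hfx₀ : f x₀ = f xs := le_antisymm (hray ts htS.1) (hmin _ hx₀M)
  have hnotint : x₀ ∉ interior M := by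
    intro hint
    rw [mem_interior_iff_mem_nhds] at hint
    obtain ⟨ε, hε, hball⟩ := Metric.mem_nhds_iff.1 hint
    have hδ : 0 < ε / (2 * ‖v‖) := by positivity
    have hmem : xs + (ts + ε / (2 * ‖v‖)) • v ∈ M := by
      apply hball
      have : xs + (ts + ε / (2 * ‖v‖)) • v = x₀ + (ε / (2 * ‖v‖)) • v := by
        rw [hx₀]; rw [add_smul]; abel
      rw [this, mem_ball, dist_self_add_left, norm_smul, Real.norm_eq_abs,
        abs_of_nonneg hδ.le, div_mul_eq_mul_div, div_lt_iff₀ (by positivity)]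
      nlinarith [hvn, hε]
    have : ts + ε / (2 * ‖v‖) ≤ ts := le_csSup hSb ⟨by linarith [htS.1], hmem⟩
    linarith
  refine ⟨x₀, ?_, hx₀M, fun x hx => hfx₀ ▸ hmin x hx⟩
  rw [hMc.isClosed.frontier_eq]
  exact ⟨hx₀M, hnotint⟩

lemma key_mono {a : ℕ} (ha : 1 ≤ a) {σ : ℝ → ℝ} (hσc : Continuous σ) (hσm : Monotone σ)
    {K : Set (Fin a → ℝ)} (hK : IsCompact K) {y : Fin a → ℝ}
    (hyf : y ∈ frontier ((fun x (i : Fin a) => σ (x i)) '' K)) :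
    ∃ z ∈ K, z ∈ frontier K ∧ (fun i => σ (z i)) = y := by
  haveI : Nonempty (Fin a) := Fin.pos_iff_nonempty.1 ha
  set Φ : (Fin a → ℝ) → (Fin a → ℝ) := fun x i => σ (x i) with hΦ
  have hΦc : Continuous Φ := continuous_pi fun i => hσc.comp (continuous_apply i)
  have hyim : y ∈ Φ '' K := by
    have hcl : IsClosed (Φ '' K) := (hK.image hΦc).isClosed
    have := hyf.1
    rwa [hcl.closure_eq] at this
  by_contra hcon
  push_neg at hcon
  set D : Set (Fin a → ℝ) := K ∩ Φ ⁻¹' {y} with hD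
  have hDc : IsCompact D := hK.inter_right (isClosed_singleton.preimage hΦc)
  have hDne : D.Nonempty := by
    obtain ⟨x, hxK, hxy⟩ := hyim
    exact ⟨x, hxK, by simpa using hxy⟩
  have hDint : D ⊆ interior K := by
    intro x hx
    by_contra hni
    exact hcon x hx.1 (hK.isClosed.frontier_eq ▸ ⟨hx.1, hni⟩) (by simpa using hx.2)
  have hballD : ∀ x ∈ D, ∃ ε > 0, ball x ε ⊆ K := by
    intro x hx
    have := hDint hx
    rw [mem_interior_iff_mem_nhds] at this
    exact Metric.mem_nhds_iff.1 this
  set J : Fin a → Set ℝ := fun i => {t | σ t = y i} with hJ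
  have hmemJ : ∀ x ∈ D, ∀ i, x i ∈ J i := by
    intro x hx i
    have : Φ x = y := by simpa using hx.2
    exact congrFun this i
  have hJconv : ∀ (i : Fin a) (s u t : ℝ), s ∈ J i → u ∈ J i → s ≤ t → t ≤ u → t ∈ J i := by
    intro i s u t hs hu hst htu
    simp only [hJ, Set.mem_setOf_eq] at hs hu ⊢
    have h1 := hσm htu
    have h2 := hσm hst
    rw [hu] at h1
    rw [hs] at h2
    exact le_antisymm h1 h2
  have hpush : ∀ x ∈ D, ∀ ε > 0, ball x ε ⊆ K → ∀ (i : Fin a) (t : ℝ),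
      t ∈ J i → |t - x i| < ε → Function.update x i t ∈ D := by
    intro x hx ε hε hb i t ht hd
    constructor
    · apply hb
      rw [mem_ball]
      refine (dist_pi_lt_iff hε).2 fun j => ?_
      rcases eq_or_ne j i with rfl | hne
      · rw [Function.update_self, Real.dist_eq]; exact hd
      · rw [Function.update_of_ne hne, dist_self]; exact hε
    · simp only [Set.mem_preimage, Set.mem_singleton_iff]
      funext j
      rcases eq_or_ne j i with rfl | hne
      · simp only [hΦ, Function.update_self]; exact ht
      · simp only [hΦ, Function.update_of_ne hne]; exact hmemJ x hx j
  -- boundedness of the level intervals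
  have hbddA : ∀ i, BddAbove (J i) := by
    intro i
    by_contra hnb
    obtain ⟨xh, hxhD, hmax⟩ := hDc.exists_isMaxOn hDne (continuous_apply i).continuousOn
    obtain ⟨ε, hε, hb⟩ := hballD xh hxhD
    obtain ⟨u, huJ, hu⟩ := not_bddAbove_iff.1 hnb (xh i + ε/2)
    have htJ : xh i + ε/2 ∈ J i :=
      hJconv i (xh i) u _ (hmemJ xh hxhD i) huJ (by linarith) hu.le
    have hx'D := hpush xh hxhD ε hε hb i _ htJ (by rw [add_sub_cancel_left, abs_of_pos (by linarith)]; linarith)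
    have h1 := isMaxOn_iff.1 hmax _ hx'D
    rw [Function.update_self] at h1
    linarith
  have hbddB : ∀ i, BddBelow (J i) := by
    intro i
    by_contra hnb
    obtain ⟨xh, hxhD, hmin⟩ := hDc.exists_isMinOn hDne (continuous_apply i).continuousOn
    obtain ⟨ε, hε, hb⟩ := hballD xh hxhD
    obtain ⟨u, huJ, hu⟩ := not_bddBelow_iff.1 hnb (xh i - ε/2)
    have htJ : xh i - ε/2 ∈ J i :=
      hJconv i u (xh i) _ huJ (hmemJ xh hxhD i) hu.le (by linarith)
    have hx'D := hpush xh hxhD ε hε hb i _ htJ (by rw [sub_sub_cancel_left, abs_of_neg (by linarith)]; linarith)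
    have h1 := isMinOn_iff.1 hmin _ hx'D
    rw [Function.update_self] at h1
    linarith
  have hJcl : ∀ i, IsClosed (J i) := fun i => isClosed_singleton.preimage hσc
  have hJne : ∀ i, (J i).Nonempty := fun i => ⟨hDne.choose i, hmemJ _ hDne.choose_spec i⟩
  set aV : Fin a → ℝ := fun i => sInf (J i) with haV
  set bV : Fin a → ℝ := fun i => sSup (J i) with hbV
  have haJ : ∀ i, aV i ∈ J i := fun i => (hJcl i).csInf_mem (hJne i) (hbddB i)
  have hbJ : ∀ i, bV i ∈ J i := fun i => (hJcl i).csSup_mem (hJne i) (hbddA i)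
  set corner : (Fin a → Bool) → (Fin a → ℝ) := fun s i => if s i then bV i else aV i with hcornerdef
  -- corners belong to D
  have hcorner : ∀ s : Fin a → Bool, corner s ∈ D := by
    intro s
    set φ : (Fin a → ℝ) → ℝ := fun x => ∑ i, (if s i then x i else -(x i)) with hφ
    have hφc : Continuous φ := by
      apply continuous_finset_sum
      intro i _
      by_cases h : s i <;> simp only [h, if_true, if_false]
      · exact continuous_apply i
      · exact (continuous_apply i).neg
    obtain ⟨xh, hxhD, hmax⟩ := hDc.exists_isMaxOn hDne hφc.continuousOn
    suffices hco : ∀ i, xh i = (if s i then bV i else aV i) by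
      have : corner s = xh := funext fun i => (hco i).symm
      rw [this]; exact hxhD
    intro i
    obtain ⟨ε, hε, hb⟩ := hballD xh hxhD
    by_cases hsi : s i
    · simp only [hsi, if_true]
      have hle : xh i ≤ bV i := le_csSup (hbddA i) (hmemJ xh hxhD i)
      rcases eq_or_lt_of_le hle with h | h
      · exact h
      exfalso
      set t := min (xh i + ε/2) (bV i) with htdef
      have htgt : xh i < t := lt_min (by linarith) h
      have htJ : t ∈ J i :=
        hJconv i (xh i) (bV i) t (hmemJ xh hxhD i) (hbJ i) htgt.le (min_le_right _ _)
      have hdist : |t - xh i| < ε := by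
        rw [abs_of_pos (by linarith)]
        have : t ≤ xh i + ε/2 := min_le_left _ _
        linarith
      have hx'D := hpush xh hxhD ε hε hb i t htJ hdist
      have h1 := isMaxOn_iff.1 hmax _ hx'D
      have h2 : φ xh < φ (Function.update xh i t) := by
        apply Finset.sum_lt_sum
        · intro j _
          rcases eq_or_ne j i with rfl | hne
          · rw [Function.update_self, if_pos hsi, if_pos hsi]; exact htgt.le
          · rw [Function.update_of_ne hne]
        · exact ⟨i, Finset.mem_univ i, by rw [Function.update_self, if_pos hsi, if_pos hsi]; exact htgt⟩
      linarith
    · simp only [hsi, if_false]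
      have hle : aV i ≤ xh i := csInf_le (hbddB i) (hmemJ xh hxhD i)
      rcases eq_or_lt_of_le hle with h | h
      · exact h.symm
      exfalso
      set t := max (xh i - ε/2) (aV i) with htdef
      have htlt : t < xh i := max_lt (by linarith) h
      have htJ : t ∈ J i :=
        hJconv i (aV i) (xh i) t (haJ i) (hmemJ xh hxhD i) (le_max_right _ _) htlt.le
      have hdist : |t - xh i| < ε := by
        rw [abs_of_neg (by linarith)]
        have : xh i - ε/2 ≤ t := le_max_left _ _
        linarith
      have hx'D := hpush xh hxhD ε hε hb i t htJ hdist
      have h1 := isMaxOn_iff.1 hmax _ hx'D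
      have h2 : φ xh < φ (Function.update xh i t) := by
        apply Finset.sum_lt_sum
        · intro j _
          rcases eq_or_ne j i with rfl | hne
          · rw [Function.update_self, if_neg hsi, if_neg hsi]; exact neg_le_neg htlt.le
          · rw [Function.update_of_ne hne]
        · exact ⟨i, Finset.mem_univ i, by rw [Function.update_self, if_neg hsi, if_neg hsi]; exact neg_lt_neg htlt⟩
      linarith
  -- uniform radius over corners
  have hcornerball : ∀ s : Fin a → Bool, ∃ ε > 0, ball (corner s) ε ⊆ K :=
    fun s => hballD _ (hcorner s)
  choose εf hεfpos hεfball using hcornerball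
  have hfne : (Finset.univ : Finset (Fin a → Bool)).Nonempty := Finset.univ_nonempty
  set ε₀ : ℝ := Finset.univ.inf' hfne εf with hε₀def
  have hε₀pos : 0 < ε₀ := by
    rw [hε₀def, Finset.lt_inf'_iff]
    exact fun s _ => hεfpos s
  have hε₀le : ∀ s, ε₀ ≤ εf s := fun s => Finset.inf'_le _ (Finset.mem_univ s)
  -- margins
  have hup : ∀ i, y i < σ (bV i + ε₀/2) := by
    intro i
    have h1 : σ (bV i) ≤ σ (bV i + ε₀/2) := hσm (by linarith)
    rcases eq_or_lt_of_le h1 with h | h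
    · exfalso
      have : bV i + ε₀/2 ∈ J i := by
        rw [hJ]; simp only [Set.mem_setOf_eq]
        rw [← h]; exact hbJ i
      have := le_csSup (hbddA i) this
      linarith
    · have : σ (bV i) = y i := hbJ i
      linarith
  have hdn : ∀ i, σ (aV i - ε₀/2) < y i := by
    intro i
    have h1 : σ (aV i - ε₀/2) ≤ σ (aV i) := hσm (by linarith)
    rcases eq_or_lt_of_le h1 with h | h
    · exfalso
      have : aV i - ε₀/2 ∈ J i := by
        rw [hJ]; simp only [Set.mem_setOf_eq]
        rw [h]; exact haJ i
      have := csInf_le (hbddB i) this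
      linarith
    · have : σ (aV i) = y i := haJ i
      linarith
  have hfne2 : (Finset.univ : Finset (Fin a)).Nonempty := Finset.univ_nonempty
  set η : ℝ := Finset.univ.inf' hfne2 (fun i => min (σ (bV i + ε₀/2) - y i) (y i - σ (aV i - ε₀/2))) with hηdef
  have hηpos : 0 < η := by
    rw [hηdef, Finset.lt_inf'_iff]
    intro i _
    exact lt_min (by linarith [hup i]) (by linarith [hdn i])
  have hηle : ∀ i, η ≤ min (σ (bV i + ε₀/2) - y i) (y i - σ (aV i - ε₀/2)) :=
    fun i => Finset.inf'_le _ (Finset.mem_univ i)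
  -- the ball around y is contained in the image
  have hsub : ball y η ⊆ Φ '' K := by
    intro w hw
    have hwc : ∀ i, |w i - y i| < η := by
      intro i
      calc |w i - y i| = dist (w i) (y i) := (Real.dist_eq _ _).symm
        _ ≤ dist w y := dist_le_pi_dist w y i
        _ < η := mem_ball.1 hw
    set s : Fin a → Bool := fun i => decide (y i < w i) with hsdef
    have hex : ∀ i, ∃ t, σ t = w i ∧ |t - corner s i| < ε₀ := by
      intro i
      by_cases hyi : y i < w i
      · have hsi : s i = true := by rw [hsdef]; simp [hyi]
        have hIcc := intermediate_value_Icc (by linarith : bV i ≤ bV i + ε₀/2) hσc.continuousOn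
        have hwin : w i ∈ Icc (σ (bV i)) (σ (bV i + ε₀/2)) := by
          constructor
          · have : σ (bV i) = y i := hbJ i
            linarith
          · have := (hwc i)
            have h2 := (hηle i).trans (min_le_left _ _)
            rw [abs_lt] at this
            linarith
        obtain ⟨t, htIcc, htσ⟩ := hIcc hwin
        refine ⟨t, htσ, ?_⟩
        have hcc : corner s i = bV i := by simp [hcornerdef, hsi]
        rw [hcc, abs_lt]
        constructor <;> [linarith [htIcc.1]; linarith [htIcc.2]]
      · have hsi : s i = false := by rw [hsdef]; simp [hyi]
        push_neg at hyi
        have hIcc := intermediate_value_Icc (by linarith : aV i - ε₀/2 ≤ aV i) hσc.continuousOn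
        have hwin : w i ∈ Icc (σ (aV i - ε₀/2)) (σ (aV i)) := by
          constructor
          · have := (hwc i)
            have h2 := (hηle i).trans (min_le_right _ _)
            rw [abs_lt] at this
            linarith
          · have : σ (aV i) = y i := haJ i
            linarith
        obtain ⟨t, htIcc, htσ⟩ := hIcc hwin
        refine ⟨t, htσ, ?_⟩
        have hcc : corner s i = aV i := by simp [hcornerdef, hsi]
        rw [hcc, abs_lt]
        constructor <;> [linarith [htIcc.1]; linarith [htIcc.2]]
    choose xf hxf1 hxf2 using hex
    refine ⟨xf, ?_, funext fun i => hxf1 i⟩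
    apply hεfball s
    rw [mem_ball]
    refine lt_of_lt_of_le ((dist_pi_lt_iff hε₀pos).2 fun i => ?_) (hε₀le s)
    rw [Real.dist_eq]
    exact hxf2 i
  have : y ∈ interior (Φ '' K) := by
    rw [mem_interior_iff_mem_nhds]
    exact Filter.mem_of_superset (ball_mem_nhds y hηpos) hsub
  exact hyf.2 this

lemma key {a : ℕ} (ha : 1 ≤ a) {σ : ℝ → ℝ} (hσc : Continuous σ)
    (hσm : Monotone σ ∨ Antitone σ)
    {K : Set (Fin a → ℝ)} (hK : IsCompact K) {y : Fin a → ℝ}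
    (hyf : y ∈ frontier ((fun x (i : Fin a) => σ (x i)) '' K)) :
    ∃ z ∈ K, z ∈ frontier K ∧ (fun i => σ (z i)) = y := by
  rcases hσm with hmon | hant
  · exact key_mono ha hσc hmon hK hyf
  · set σ' : ℝ → ℝ := fun t => σ (-t) with hσ'
    have hσ'm : Monotone σ' := fun s t hst => hant (neg_le_neg hst)
    have hσ'c : Continuous σ' := hσc.comp continuous_neg
    set N : (Fin a → ℝ) ≃ₜ (Fin a → ℝ) := Homeomorph.neg (Fin a → ℝ) with hN
    have hK' : IsCompact (N '' K) := hK.image N.continuous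
    have him : (fun x (i : Fin a) => σ' (x i)) '' (N '' K) = (fun x (i : Fin a) => σ (x i)) '' K := by
      rw [Set.image_image]
      apply Set.image_congr
      intro x _
      funext i
      simp [hσ', hN]
    have hyf' : y ∈ frontier ((fun x (i : Fin a) => σ' (x i)) '' (N '' K)) := by
      rw [him]; exact hyf
    obtain ⟨z, hzK', hzf, hz⟩ := key_mono ha hσ'c hσ'm hK' hyf'
    refine ⟨-z, ?_, ?_, ?_⟩
    · obtain ⟨x, hxK, hxz⟩ := hzK'
      have : x = -z := by
        have : N x = z := hxz
        simp [hN] at this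
        simp [← this]
      rwa [← this]
    · have h1 : N '' K = N.symm ⁻¹' K := N.image_eq_preimage_symm K
      rw [h1, ← N.symm.preimage_frontier] at hzf
      have : N.symm z ∈ frontier K := hzf
      simpa [hN] using this
    · funext i
      have := congrFun hz i
      simpa [hσ'] using this


theorem main_ind {σ : ℝ → ℝ} {m : ℕ} (hσc : Continuous σ)
    (hσm : Monotone σ ∨ Antitone σ) (hm : 1 ≤ m)
    {a b : ℕ} {G : (Fin a → ℝ) → (Fin b → ℝ)} (hG : IsNetChain σ m G) :
    m ≤ a → ∀ (j : Fin b) (M : Set (Fin a → ℝ)), IsCompact M → M.Nonempty →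
      ∃ x₀ ∈ frontier M, x₀ ∈ M ∧ ∀ x ∈ M, G x₀ j ≤ G x j := by
  induction hG with
  | @last a b W v hb =>
    intro ha j M hMc hMne
    have hane : 1 ≤ a := hm.trans ha
    haveI : Nonempty (Fin a) := Fin.pos_iff_nonempty.1 hane
    have hmv : ∀ x : Fin a → ℝ, W.mulVec x j = ∑ k, W j k * x k := by
      intro x; simp [Matrix.mulVec, dotProduct]
    have hfc : Continuous fun x : Fin a → ℝ => (W.mulVec x + v) j :=
      (continuous_apply j).comp
        ((W.mulVecLin.continuous_of_finiteDimensional).add continuous_const :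
          Continuous fun x => W.mulVecLin x + v)
    obtain ⟨xs, hxs, hminon⟩ := hMc.exists_isMinOn hMne hfc.continuousOn
    have hmin : ∀ x ∈ M, (W.mulVec xs + v) j ≤ (W.mulVec x + v) j := isMinOn_iff.1 hminon
    have hsplit : ∀ (x z : Fin a → ℝ) (t : ℝ),
        (W.mulVec (x + t • z) + v) j
          = (W.mulVec x + v) j + t * ∑ k, W j k * z k := by
      intro x z t
      simp only [Pi.add_apply, hmv, Pi.smul_apply, smul_eq_mul, Finset.mul_sum]
      rw [show (∑ k, W j k * (x k + t * z k)) = (∑ k, (W j k * x k + t * (W j k * z k))) from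
        Finset.sum_congr rfl fun k _ => by ring, Finset.sum_add_distrib]
      ring
    set i0 : Fin a := ⟨0, hane⟩ with hi0
    by_cases hw : (fun k => W j k) = 0
    · set z0 : Fin a → ℝ := Pi.single i0 (1:ℝ) with hz0
      have hee : z0 ≠ 0 := by
        intro h
        have := congrFun h i0
        simp [hz0] at this
      refine ray_to_frontier hMc hxs hmin hee ?_
      intro t ht
      show (W.mulVec (xs + t • z0) + v) j ≤ (W.mulVec xs + v) j
      rw [hsplit]
      have hzero : (∑ k, W j k * z0 k) = 0 := by
        apply Finset.sum_eq_zero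
        intro k _
        have : W j k = 0 := congrFun hw k
        rw [this, zero_mul]
      rw [hzero, mul_zero, add_zero]
    · set z1 : Fin a → ℝ := -(fun k => W j k) with hz1
      refine ray_to_frontier hMc hxs hmin (v := z1) ?_ ?_
      · rw [hz1]; exact neg_ne_zero.2 hw
      intro t ht
      show (W.mulVec (xs + t • z1) + v) j ≤ (W.mulVec xs + v) j
      rw [hsplit]
      have hs : (∑ k, W j k * z1 k) = -∑ k, (W j k)^2 := by
        rw [← Finset.sum_neg_distrib]
        apply Finset.sum_congr rfl
        intros k _
        simp [hz1, sq]
      rw [hs]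
      have hnn : (0:ℝ) ≤ ∑ k, (W j k)^2 := Finset.sum_nonneg fun k _ => sq_nonneg _
      nlinarith
  | @hidden a b c W v g hb hg ih =>
    intro ha j M hMc hMne
    have hane : 1 ≤ a := hm.trans ha
    have hgc : Continuous g := netchain_continuous hσc hg
    have hΦc : Continuous fun (y : Fin a → ℝ) (i : Fin a) => σ (y i) :=
      continuous_pi fun i => hσc.comp (continuous_apply i)
    have hGc : Continuous fun x : Fin a → ℝ => (g fun i => σ (W.mulVec x i + v i)) j := by
      refine (continuous_apply j).comp (hgc.comp (continuous_pi fun i => hσc.comp ?_))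
      exact ((continuous_apply i).comp W.mulVecLin.continuous_of_finiteDimensional).add
        continuous_const
    by_cases hinj : Function.Injective (W.mulVecLin : (Fin a → ℝ) →ₗ[ℝ] (Fin b → ℝ))
    · -- invertible case
      have hab : a ≤ b := by
        have := LinearMap.finrank_le_finrank_of_injective hinj
        simpa using this
      have hba : b = a := le_antisymm (hb.trans ha) hab
      subst hba
      have hsurj := LinearMap.injective_iff_surjective.1 hinj
      set e := LinearEquiv.ofBijective W.mulVecLin ⟨hinj, hsurj⟩ with he
      set T : (Fin b → ℝ) ≃ₜ (Fin b → ℝ) :=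
        (e.toContinuousLinearEquiv.toHomeomorph).trans (Homeomorph.addRight v) with hT
      have hTx : ∀ x, T x = W.mulVec x + v := by
        intro x
        simp [hT, he, LinearEquiv.ofBijective_apply]
        rfl
      set Φ := fun (y : Fin b → ℝ) (i : Fin b) => σ (y i) with hΦ
      set K := T '' M with hK
      have hKc : IsCompact K := hMc.image T.continuous
      set M₁ := Φ '' K with hM₁
      have hM₁c : IsCompact M₁ := hKc.image hΦc
      have hM₁ne : M₁.Nonempty := (hMne.image T).image Φ
      obtain ⟨yh, hyhf, hyhM, hyhmin⟩ := ih ha j M₁ hM₁c hM₁ne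
      obtain ⟨z, hzK, hzf, hzy⟩ := key hane hσc hσm hKc hyhf
      refine ⟨T.symm z, ?_, ?_, ?_⟩
      · have h1 : K = T.symm ⁻¹' M := by rw [hK]; exact T.image_eq_preimage_symm M
        have h2 : frontier K = T.symm ⁻¹' frontier M := by
          rw [h1, T.symm.preimage_frontier]
        rw [h2] at hzf
        exact hzf
      · obtain ⟨x, hxM, hxz⟩ := hzK
        have : T.symm z = x := by rw [← hxz]; exact T.symm_apply_apply x
        rwa [this]
      · intro x hxM
        show g (fun i => σ (W.mulVec (T.symm z) i + v i)) j ≤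
          g (fun i => σ (W.mulVec x i + v i)) j
        have hval : (fun i => σ (W.mulVec (T.symm z) i + v i)) = yh := by
          rw [← hzy]
          funext i
          have h3 : W.mulVec (T.symm z) + v = z := by rw [← hTx]; exact T.apply_symm_apply z
          rw [show W.mulVec (T.symm z) i + v i = (W.mulVec (T.symm z) + v) i from rfl, h3]
        rw [hval]
        have hmem : (fun i => σ (W.mulVec x i + v i)) ∈ M₁ := by
          refine ⟨T x, ⟨x, hxM, rfl⟩, ?_⟩
          show (fun i => σ ((T x) i)) = _
          funext i
          rw [hTx]
          rfl
        exact hyhmin _ hmem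
    · -- kernel case
      have hker : ∃ z : Fin a → ℝ, z ≠ 0 ∧ W.mulVec z = 0 := by
        have h2 : (LinearMap.ker W.mulVecLin) ≠ ⊥ := by
          intro h
          exact hinj (LinearMap.ker_eq_bot.1 h)
        obtain ⟨z, hzmem, hz0⟩ := Submodule.exists_mem_ne_zero_of_ne_bot h2
        exact ⟨z, hz0, by simpa [Matrix.mulVecLin_apply] using hzmem⟩
      obtain ⟨z, hz0, hzker⟩ := hker
      obtain ⟨xs, hxs, hminon⟩ := hMc.exists_isMinOn hMne hGc.continuousOn
      refine ray_to_frontier hMc hxs (isMinOn_iff.1 hminon) hz0 ?_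
      intro t ht
      have heq : W.mulVec (xs + t • z) = W.mulVec xs := by
        rw [Matrix.mulVec_add, Matrix.mulVec_smul, hzker]
        simp
      show g (fun i => σ (W.mulVec (xs + t • z) i + v i)) j ≤
        g (fun i => σ (W.mulVec xs i + v i)) j
      rw [heq]

end AuxMinimumPrinciple

/-- **Minimum principle.** For a continuous monotone activation `σ`, every
scalar network function of width at most the input dimension `n₀` attains its minimum
over a nonempty compact set `M` at a boundary point of `M`. -/

theorem minimum_principle
    (n₀ : ℕ) (M : Set (Fin n₀ → ℝ)) (hM : IsCompact M) (hMne : M.Nonempty)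
    (σ : ℝ → ℝ) (hσc : Continuous σ) (hσm : Monotone σ ∨ Antitone σ)
    (F : (Fin n₀ → ℝ) → ℝ) (hF : IsScalarNet σ n₀ F) :
    ∃ x₀ ∈ frontier M, x₀ ∈ M ∧ ∀ x ∈ M, F x₀ ≤ F x := by
  
  obtain ⟨G, hG, hFG⟩ := hF
  have hm : 1 ≤ n₀ := netchain_out_le hG
  obtain ⟨x₀, hfr, hM0, hmin⟩ := main_ind hσc hσm hm hG (le_refl n₀) 0 M hM hMne
  exact ⟨x₀, hfr, hM0, fun x hx => by rw [hFG, hFG]; exact hmin x hx⟩
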